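/- Let B = {f_1,…,f_N} be a linearly independent set of functions ℝ^n → ℝ, each of which is a monomial, i.e. f_i(x) = x_1^{α_1} x_2^{α_2} ⋯ x_n^{α_n} for some exponent vector α ∈ ℕ^n, and suppose B is symmetric under the action (σ • f)(x) = f(σ⁻¹ • x). Let F = span(B) and let P = {a_1,…,a_N} be a symmetric subset of ℝ^n such that the Lagrange interpolation problem with space F and nodes P is unisolvent. Then B and P are equivalent as S_n-sets: there exists a bijection ψ : B → P with ψ(σ • f) = σ • ψ(f) for all σ ∈ S_n and f ∈ B. -/

import Mathlib

/-- The action of `S_n` on `ℝ^n` by permuting coordinates: `σ • x = x ∘ σ⁻¹`. -/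
def psmul {n : ℕ} (σ : Equiv.Perm (Fin n)) (x : Fin n → ℝ) : Fin n → ℝ := x ∘ ⇑σ⁻¹

/-- The action of `S_n` on functions `ℝ^n → ℝ`: `(σ • f)(x) = f(σ⁻¹ • x)`. -/
def fsmul {n : ℕ} (σ : Equiv.Perm (Fin n)) (f : (Fin n → ℝ) → ℝ) : (Fin n → ℝ) → ℝ :=
  fun x => f (psmul σ⁻¹ x)

/-- A set `B` of functions and a set `P` of points are equivalent as `S_n`-sets: there is an
`S_n`-equivariant bijection `B → P`. -/
def FPEquiv {n : ℕ} (B : Set ((Fin n → ℝ) → ℝ)) (P : Set (Fin n → ℝ)) : Prop :=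
  ∃ ψ : B ≃ P, ∀ (σ : Equiv.Perm (Fin n)) (z w : B),
    fsmul σ (z : (Fin n → ℝ) → ℝ) = (w : (Fin n → ℝ) → ℝ) →
      psmul σ ((ψ z : Fin n → ℝ)) = ((ψ w : Fin n → ℝ))

/-- The Lagrange interpolation problem with interpolation space `F` and nodes
`a 1, …, a N` is unisolvent. -/
def Unisolvent {n N : ℕ} (F : Submodule ℝ ((Fin n → ℝ) → ℝ))
    (a : Fin N → (Fin n → ℝ)) : Prop :=
  ∀ b : Fin N → ℝ, ∃! f : F, ∀ i, (f : (Fin n → ℝ) → ℝ) (a i) = b i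

universe u v


lemma my_exists_sigma0 {n : ℕ} {T : Type*} (x₀ : Fin n → T) :
    ∃ σ₀ : Equiv.Perm (Fin n), (∀ i, x₀ (σ₀ i) = x₀ i) ∧
      (∀ i j, x₀ i = x₀ j → ∃ k : ℕ, (σ₀ ^ k) i = j) := by
  classical
  have hcyc : ∀ v : T, ∃ c : Equiv.Perm (Fin n),
      c.IsCycleOn (Finset.univ.filter (fun i => x₀ i = v)) ∧
      c.support ⊆ Finset.univ.filter (fun i => x₀ i = v) :=
    fun v => Finset.exists_cycleOn _
  choose c hc1 hc2 using hcyc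
  set s : Finset T := Finset.univ.image x₀ with hs
  have hcomm : (s : Set T).Pairwise fun a b => Commute (c a) (c b) := by
    intro a _ b _ hab
    apply Equiv.Perm.Disjoint.commute
    rw [Equiv.Perm.disjoint_iff_disjoint_support]
    refine Finset.disjoint_left.2 fun i hia hib => ?_
    have h1 := hc2 a hia
    have h2 := hc2 b hib
    simp only [Finset.mem_filter] at h1 h2
    exact hab (h1.2 ▸ h2.2)
  -- fibers are invariant under their cycles
  have hmem : ∀ v (b : Fin n), x₀ b = v → x₀ (c v b) = v := by
    intro v b hb
    have : b ∈ (Finset.univ.filter (fun i => x₀ i = v) : Finset (Fin n)) := by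
      simp [hb]
    have := (hc1 v).1.mapsTo (by simpa using this)
    simpa using this
  -- erased product fixes points of the fiber
  have herase : ∀ v (b : Fin n), x₀ b = v →
      ((s.erase v).noncommProd c (fun _ hx _ hy hxy =>
        hcomm (s.mem_of_mem_erase hx) (s.mem_of_mem_erase hy) hxy)) b = b := by
    intro v b hb
    refine Finset.noncommProd_induction _ _ _ (p := fun π : Equiv.Perm (Fin n) => π b = b) ?_ ?_ ?_
    · intro π ρ hπ hρ
      simp [Equiv.Perm.mul_apply, hρ, hπ]
    · simp
    · intro w hw
      by_contra hne
      have : b ∈ (c w).support := Equiv.Perm.mem_support.2 hne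
      have := hc2 w this
      simp only [Finset.mem_filter] at this
      exact (Finset.ne_of_mem_erase hw) (hb ▸ this.2.symm)
  have key : ∀ i, (s.noncommProd c hcomm) i = c (x₀ i) i := by
    intro i
    have hv : x₀ i ∈ s := by simp [hs]
    rw [← Finset.noncommProd_erase_mul s hv c hcomm]
    rw [Equiv.Perm.mul_apply]
    exact herase (x₀ i) _ (hmem _ i rfl)
  refine ⟨s.noncommProd c hcomm, fun i => by rw [key]; exact hmem _ i rfl, ?_⟩
  intro i j hij
  -- same cycle within the fiber
  have hi : i ∈ ((Finset.univ.filter (fun k => x₀ k = x₀ j) : Finset (Fin n)) : Set (Fin n)) := by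
    simp [hij]
  have hj : j ∈ ((Finset.univ.filter (fun k => x₀ k = x₀ j) : Finset (Fin n)) : Set (Fin n)) := by
    simp
  obtain ⟨k, -, hk⟩ := ((hc1 (x₀ j)).2 hi hj).exists_pow_eq'
  refine ⟨k, ?_⟩
  have agree : ∀ (m : ℕ) (b : Fin n), x₀ b = x₀ j →
      ((s.noncommProd c hcomm) ^ m) b = ((c (x₀ j)) ^ m) b := by
    intro m
    induction m with
    | zero => simp
    | succ m ih =>
      intro b hb
      rw [pow_succ, pow_succ, Equiv.Perm.mul_apply, Equiv.Perm.mul_apply, key, hb]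
      exact ih _ (hmem _ b hb)
  rw [agree k i hij, hk]



open scoped Classical in
noncomputable def myStab {n : ℕ} {T : Type*} (x : Fin n → T) : Finset (Equiv.Perm (Fin n)) :=
  Finset.univ.filter (fun σ => x ∘ ⇑σ = x)

lemma mem_myStab {n : ℕ} {T : Type*} {x : Fin n → T} {σ : Equiv.Perm (Fin n)} :
    σ ∈ myStab x ↔ x ∘ ⇑σ = x := by simp [myStab]

lemma my_exists_sigma' {n : ℕ} {T : Type u} (x₀ : Fin n → T) :
    ∃ σ₀ : Equiv.Perm (Fin n), x₀ ∘ ⇑σ₀ = x₀ ∧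
      ∀ {T' : Type v} (y : Fin n → T'), y ∘ ⇑σ₀ = y → myStab x₀ ⊆ myStab y := by
  obtain ⟨σ₀, h1, h2⟩ := my_exists_sigma0 x₀
  refine ⟨σ₀, funext h1, ?_⟩
  intro T' y hy σ hσ
  rw [mem_myStab] at hσ ⊢
  have hfix : ∀ (m : ℕ) (b : Fin n), y ((σ₀ ^ m) b) = y b := by
    intro m
    induction m with
    | zero => simp
    | succ m ih =>
      intro b
      rw [pow_succ, Equiv.Perm.mul_apply, ih]
      exact congrFun hy b
  funext i
  have hx : x₀ i = x₀ (σ i) := (congrFun hσ i).symm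
  obtain ⟨k, hk⟩ := h2 i (σ i) hx
  calc y (σ i) = y ((σ₀ ^ k) i) := by rw [hk]
    _ = y i := hfix k i

open scoped Classical in
lemma my_exists_pair {n : ℕ} {T₁ : Type u} {T₂ : Type v}
    (A : Finset (Fin n → T₁)) (C : Finset (Fin n → T₂))
    (hcount : ∀ σ : Equiv.Perm (Fin n),
      (A.filter fun x => x ∘ ⇑σ = x).card = (C.filter fun y => y ∘ ⇑σ = y).card)
    (hAne : A.Nonempty) :
    ∃ x₀ ∈ A, ∃ y₀ ∈ C, myStab x₀ = myStab y₀ := by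
  have hCne : C.Nonempty := by
    rw [← Finset.card_pos]
    have h1 : A.filter (fun x => x ∘ ⇑(1 : Equiv.Perm (Fin n)) = x) = A :=
      Finset.filter_true_of_mem (fun x _ => by simp)
    have h2 : C.filter (fun y => y ∘ ⇑(1 : Equiv.Perm (Fin n)) = y) = C :=
      Finset.filter_true_of_mem (fun y _ => by simp)
    have := hcount 1
    rw [h1, h2] at this
    rw [← this, Finset.card_pos]
    exact hAne
  obtain ⟨x₁, hx₁A, hx₁max⟩ := A.exists_max_image (fun x => (myStab x).card) hAne
  obtain ⟨y₁, hy₁C, hy₁max⟩ := C.exists_max_image (fun y => (myStab y).card) hCne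
  by_cases hm : (myStab y₁).card ≤ (myStab x₁).card
  · obtain ⟨σ₀, hfix, hsub⟩ := my_exists_sigma' x₁
    have hne : (C.filter fun y => y ∘ ⇑σ₀ = y).Nonempty := by
      rw [← Finset.card_pos, ← hcount σ₀, Finset.card_pos]
      exact ⟨x₁, Finset.mem_filter.2 ⟨hx₁A, hfix⟩⟩
    obtain ⟨y₀, hy₀⟩ := hne
    rw [Finset.mem_filter] at hy₀
    have hss := hsub _ hy₀.2
    refine ⟨x₁, hx₁A, y₀, hy₀.1, Finset.eq_of_subset_of_card_le hss ?_⟩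
    exact le_trans (hy₁max y₀ hy₀.1) hm
  · push_neg at hm
    obtain ⟨σ₀, hfix, hsub⟩ := my_exists_sigma' y₁
    have hne : (A.filter fun x => x ∘ ⇑σ₀ = x).Nonempty := by
      rw [← Finset.card_pos, hcount σ₀, Finset.card_pos]
      exact ⟨y₁, Finset.mem_filter.2 ⟨hy₁C, hfix⟩⟩
    obtain ⟨x₀, hx₀⟩ := hne
    rw [Finset.mem_filter] at hx₀
    have hss := hsub _ hx₀.2
    refine ⟨x₀, hx₀.1, y₁, hy₁C, (Finset.eq_of_subset_of_card_le hss ?_).symm⟩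
    exact le_trans (hx₁max x₀ hx₀.1) hm.le




-- well-definedness transfer
open scoped Classical in
lemma my_wd {n : ℕ} {T₁ : Type u} {T₂ : Type v} {x₀ : Fin n → T₁} {y₀ : Fin n → T₂}
    (hst : myStab x₀ ⊆ myStab y₀)
    {σ τ : Equiv.Perm (Fin n)} (h : x₀ ∘ ⇑σ = x₀ ∘ ⇑τ) : y₀ ∘ ⇑σ = y₀ ∘ ⇑τ := by
  have h1 : σ * τ⁻¹ ∈ myStab x₀ := by
    rw [mem_myStab]
    funext i
    show x₀ (σ (τ⁻¹ i)) = x₀ i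
    calc x₀ (σ (τ⁻¹ i)) = x₀ (τ (τ⁻¹ i)) := congrFun h (τ⁻¹ i)
      _ = x₀ i := by simp
  have h2 := hst h1
  rw [mem_myStab] at h2
  funext j
  show y₀ (σ j) = y₀ (τ j)
  have := congrFun h2 (τ j)
  simpa using this

open scoped Classical in
lemma my_core {n : ℕ} {T₁ : Type u} {T₂ : Type v} (hne : Nonempty (Fin n → T₂)) (k : ℕ) :
    ∀ (A : Finset (Fin n → T₁)) (C : Finset (Fin n → T₂)), A.card = k →
    (∀ σ : Equiv.Perm (Fin n), ∀ x ∈ A, x ∘ ⇑σ ∈ A) →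
    (∀ σ : Equiv.Perm (Fin n), ∀ y ∈ C, y ∘ ⇑σ ∈ C) →
    (∀ σ : Equiv.Perm (Fin n),
      (A.filter fun x => x ∘ ⇑σ = x).card = (C.filter fun y => y ∘ ⇑σ = y).card) →
    ∃ Ψ : (Fin n → T₁) → (Fin n → T₂), Set.BijOn Ψ ↑A ↑C ∧
      (∀ σ : Equiv.Perm (Fin n), ∀ x ∈ A, Ψ (x ∘ ⇑σ) = Ψ x ∘ ⇑σ) := by
  induction k using Nat.strong_induction_on with
  | _ k IH =>
  intro A C hk hA hC hcount
  rcases A.eq_empty_or_nonempty with rfl | hAne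
  · have hC0 : C = ∅ := by
      have h1 : (∅ : Finset (Fin n → T₁)).filter
          (fun x => x ∘ ⇑(1 : Equiv.Perm (Fin n)) = x) = ∅ := by simp
      have h2 : C.filter (fun y => y ∘ ⇑(1 : Equiv.Perm (Fin n)) = y) = C :=
        Finset.filter_true_of_mem (fun y _ => by simp)
      have := hcount 1
      rw [h1, h2] at this
      exact (Finset.card_eq_zero.1 this.symm)
    subst hC0
    exact ⟨fun _ => Classical.choice hne, by simp, by simp⟩
  obtain ⟨x₀, hx₀A, y₀, hy₀C, hst⟩ := my_exists_pair A C hcount hAne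
  set O₁ : Finset (Fin n → T₁) :=
    Finset.univ.image (fun σ : Equiv.Perm (Fin n) => x₀ ∘ ⇑σ) with hO₁
  set O₂ : Finset (Fin n → T₂) :=
    Finset.univ.image (fun σ : Equiv.Perm (Fin n) => y₀ ∘ ⇑σ) with hO₂
  have hmemO₁ : ∀ z, z ∈ O₁ ↔ ∃ σ : Equiv.Perm (Fin n), z = x₀ ∘ ⇑σ := by
    intro z
    simp only [hO₁, Finset.mem_image, Finset.mem_univ, true_and]
    exact ⟨fun ⟨σ, h⟩ => ⟨σ, h.symm⟩, fun ⟨σ, h⟩ => ⟨σ, h.symm⟩⟩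
  have hmemO₂ : ∀ w, w ∈ O₂ ↔ ∃ σ : Equiv.Perm (Fin n), w = y₀ ∘ ⇑σ := by
    intro w
    simp only [hO₂, Finset.mem_image, Finset.mem_univ, true_and]
    exact ⟨fun ⟨σ, h⟩ => ⟨σ, h.symm⟩, fun ⟨σ, h⟩ => ⟨σ, h.symm⟩⟩
  have hcompmul : ∀ (z : Fin n → T₁) (σ τ : Equiv.Perm (Fin n)),
      (z ∘ ⇑σ) ∘ ⇑τ = z ∘ ⇑(σ * τ) := fun z σ τ => rfl
  have hcompmul₂ : ∀ (z : Fin n → T₂) (σ τ : Equiv.Perm (Fin n)),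
      (z ∘ ⇑σ) ∘ ⇑τ = z ∘ ⇑(σ * τ) := fun z σ τ => rfl
  have hsub₁ : myStab x₀ ⊆ myStab y₀ := by rw [hst]
  have hsub₂ : myStab y₀ ⊆ myStab x₀ := by rw [hst]
  have hO₁A : O₁ ⊆ A := by
    intro z hz
    obtain ⟨σ, rfl⟩ := (hmemO₁ z).1 hz
    exact hA σ x₀ hx₀A
  have hO₂C : O₂ ⊆ C := by
    intro w hw
    obtain ⟨σ, rfl⟩ := (hmemO₂ w).1 hw
    exact hC σ y₀ hy₀C
  have hx₀O₁ : x₀ ∈ O₁ := (hmemO₁ x₀).2 ⟨1, by simp⟩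
  have hclO₁ : ∀ z (τ : Equiv.Perm (Fin n)), z ∈ O₁ → z ∘ ⇑τ ∈ O₁ := by
    intro z τ hz
    obtain ⟨σ, rfl⟩ := (hmemO₁ z).1 hz
    exact (hmemO₁ _).2 ⟨σ * τ, (hcompmul x₀ σ τ).symm ▸ rfl⟩
  have hclO₁' : ∀ z (τ : Equiv.Perm (Fin n)), z ∘ ⇑τ ∈ O₁ → z ∈ O₁ := by
    intro z τ hz
    have : z = (z ∘ ⇑τ) ∘ ⇑τ⁻¹ := by funext i; simp
    rw [this]
    exact hclO₁ _ _ hz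
  have hclO₂ : ∀ w (τ : Equiv.Perm (Fin n)), w ∈ O₂ → w ∘ ⇑τ ∈ O₂ := by
    intro w τ hw
    obtain ⟨σ, rfl⟩ := (hmemO₂ w).1 hw
    exact (hmemO₂ _).2 ⟨σ * τ, (hcompmul₂ y₀ σ τ).symm ▸ rfl⟩
  have hclO₂' : ∀ w (τ : Equiv.Perm (Fin n)), w ∘ ⇑τ ∈ O₂ → w ∈ O₂ := by
    intro w τ hw
    have : w = (w ∘ ⇑τ) ∘ ⇑τ⁻¹ := by funext i; simp
    rw [this]
    exact hclO₂ _ _ hw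
  -- the orbit map
  set Φ : (Fin n → T₁) → (Fin n → T₂) := fun z =>
    if h : ∃ σ : Equiv.Perm (Fin n), z = x₀ ∘ ⇑σ then y₀ ∘ ⇑(h.choose) else y₀ with hΦdef
  have hΦspec : ∀ σ : Equiv.Perm (Fin n), Φ (x₀ ∘ ⇑σ) = y₀ ∘ ⇑σ := by
    intro σ
    have hex : ∃ τ : Equiv.Perm (Fin n), x₀ ∘ ⇑σ = x₀ ∘ ⇑τ := ⟨σ, rfl⟩
    have h1 : Φ (x₀ ∘ ⇑σ) = y₀ ∘ ⇑(hex.choose) := dif_pos hex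
    rw [h1]
    exact (my_wd hsub₁ hex.choose_spec).symm
  have hΦinj : ∀ {σ τ : Equiv.Perm (Fin n)}, y₀ ∘ ⇑σ = y₀ ∘ ⇑τ → x₀ ∘ ⇑σ = x₀ ∘ ⇑τ :=
    fun h => my_wd hsub₂ h
  have hΦeq : ∀ z (σ : Equiv.Perm (Fin n)), z ∈ O₁ → Φ (z ∘ ⇑σ) = Φ z ∘ ⇑σ := by
    intro z σ hz
    obtain ⟨τ, rfl⟩ := (hmemO₁ z).1 hz
    rw [hcompmul x₀ τ σ, hΦspec, hΦspec, ← hcompmul₂]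
  have hΦbij : Set.BijOn Φ ↑O₁ ↑O₂ := by
    refine ⟨?_, ?_, ?_⟩
    · intro z hz
      obtain ⟨σ, rfl⟩ := (hmemO₁ z).1 (by exact_mod_cast hz)
      rw [hΦspec]
      exact_mod_cast (hmemO₂ _).2 ⟨σ, rfl⟩
    · intro z1 h1 z2 h2 heq
      obtain ⟨σ, rfl⟩ := (hmemO₁ z1).1 (by exact_mod_cast h1)
      obtain ⟨τ, rfl⟩ := (hmemO₁ z2).1 (by exact_mod_cast h2)
      rw [hΦspec, hΦspec] at heq
      exact hΦinj heq
    · intro w hw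
      obtain ⟨σ, rfl⟩ := (hmemO₂ w).1 (by exact_mod_cast hw)
      exact ⟨x₀ ∘ ⇑σ, by exact_mod_cast (hmemO₁ _).2 ⟨σ, rfl⟩, hΦspec σ⟩
  -- orbit fixed-point counts agree
  have hOcount : ∀ σ : Equiv.Perm (Fin n),
      (O₁.filter fun z => z ∘ ⇑σ = z).card = (O₂.filter fun w => w ∘ ⇑σ = w).card := by
    intro σ
    refine Finset.card_bij (fun z _ => Φ z) ?_ ?_ ?_
    · intro z hz
      rw [Finset.mem_filter] at hz ⊢
      refine ⟨hΦbij.mapsTo hz.1, ?_⟩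
      rw [← hΦeq z σ hz.1, hz.2]
    · intro z1 h1 z2 h2 heq
      rw [Finset.mem_filter] at h1 h2
      exact hΦbij.injOn h1.1 h2.1 heq
    · intro w hw
      rw [Finset.mem_filter] at hw
      obtain ⟨τ, rfl⟩ := (hmemO₂ w).1 hw.1
      refine ⟨x₀ ∘ ⇑τ, ?_, hΦspec τ⟩
      rw [Finset.mem_filter]
      refine ⟨(hmemO₁ _).2 ⟨τ, rfl⟩, ?_⟩
      rw [hcompmul x₀ τ σ]
      rw [hcompmul₂ y₀ τ σ] at hw
      exact hΦinj hw.2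
  -- splitting the counts
  have hsplitA : ∀ σ : Equiv.Perm (Fin n),
      (A.filter fun z => z ∘ ⇑σ = z).card =
      (O₁.filter fun z => z ∘ ⇑σ = z).card + ((A \ O₁).filter fun z => z ∘ ⇑σ = z).card := by
    intro σ
    rw [← Finset.card_union_of_disjoint, ← Finset.filter_union,
      Finset.union_sdiff_of_subset hO₁A]
    exact Finset.disjoint_filter_filter (Finset.disjoint_sdiff)
  have hsplitC : ∀ σ : Equiv.Perm (Fin n),
      (C.filter fun w => w ∘ ⇑σ = w).card =
      (O₂.filter fun w => w ∘ ⇑σ = w).card + ((C \ O₂).filter fun w => w ∘ ⇑σ = w).card := by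
    intro σ
    rw [← Finset.card_union_of_disjoint, ← Finset.filter_union,
      Finset.union_sdiff_of_subset hO₂C]
    exact Finset.disjoint_filter_filter (Finset.disjoint_sdiff)
  have hcount' : ∀ σ : Equiv.Perm (Fin n),
      ((A \ O₁).filter fun z => z ∘ ⇑σ = z).card =
      ((C \ O₂).filter fun w => w ∘ ⇑σ = w).card := by
    intro σ
    have h1 := hsplitA σ
    have h2 := hsplitC σ
    have h3 := hcount σ
    have h4 := hOcount σ
    omega
  -- apply induction hypothesis
  have hcard : (A \ O₁).card < k := by
    have h1 : (A \ O₁).card = A.card - O₁.card := Finset.card_sdiff_of_subset hO₁A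
    have h2 : 0 < O₁.card := Finset.card_pos.2 ⟨x₀, hx₀O₁⟩
    have h3 : O₁.card ≤ A.card := Finset.card_le_card hO₁A
    omega
  obtain ⟨Ψ', hΨ'bij, hΨ'eq⟩ := IH (A \ O₁).card hcard (A \ O₁) (C \ O₂) rfl
    (fun σ x hx => by
      rw [Finset.mem_sdiff] at hx ⊢
      exact ⟨hA σ x hx.1, fun h => hx.2 (hclO₁' x σ h)⟩)
    (fun σ y hy => by
      rw [Finset.mem_sdiff] at hy ⊢
      exact ⟨hC σ y hy.1, fun h => hy.2 (hclO₂' y σ h)⟩)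
    hcount'
  set Ψ : (Fin n → T₁) → (Fin n → T₂) := fun z => if z ∈ O₁ then Φ z else Ψ' z with hΨdef
  have hΨO : Set.EqOn Ψ Φ ↑O₁ := fun z hz => if_pos (by exact_mod_cast hz)
  have hΨA' : Set.EqOn Ψ Ψ' ↑(A \ O₁) := by
    intro z hz
    have hz' : z ∈ A \ O₁ := by exact_mod_cast hz
    exact if_neg (Finset.mem_sdiff.1 hz').2
  have hsetA : (↑O₁ : Set (Fin n → T₁)) ∪ ↑(A \ O₁) = ↑A := by
    rw [Finset.coe_sdiff]
    exact Set.union_diff_cancel (by exact_mod_cast hO₁A)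
  have hsetC : (↑O₂ : Set (Fin n → T₂)) ∪ ↑(C \ O₂) = ↑C := by
    rw [Finset.coe_sdiff]
    exact Set.union_diff_cancel (by exact_mod_cast hO₂C)
  have hbij : Set.BijOn Ψ ↑A ↑C := by
    rw [← hsetA, ← hsetC]
    refine Set.BijOn.union (hΦbij.congr hΨO.symm) (hΨ'bij.congr hΨA'.symm) ?_
    intro z1 h1 z2 h2 heq
    rcases h1 with h1 | h1 <;> rcases h2 with h2 | h2
    · exact (hΦbij.congr hΨO.symm).injOn h1 h2 heq
    · exfalso
      have e1 : Ψ z1 ∈ (↑O₂ : Set (Fin n → T₂)) := (hΦbij.congr hΨO.symm).mapsTo h1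
      have e2 : Ψ z2 ∈ (↑(C \ O₂) : Set (Fin n → T₂)) := (hΨ'bij.congr hΨA'.symm).mapsTo h2
      rw [heq] at e1
      rw [Finset.coe_sdiff] at e2
      exact e2.2 e1
    · exfalso
      have e1 : Ψ z1 ∈ (↑(C \ O₂) : Set (Fin n → T₂)) := (hΨ'bij.congr hΨA'.symm).mapsTo h1
      have e2 : Ψ z2 ∈ (↑O₂ : Set (Fin n → T₂)) := (hΦbij.congr hΨO.symm).mapsTo h2
      rw [← heq] at e2
      rw [Finset.coe_sdiff] at e1
      exact e1.2 e2
    · exact (hΨ'bij.congr hΨA'.symm).injOn h1 h2 heq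
  refine ⟨Ψ, hbij, ?_⟩
  intro σ z hzA
  by_cases hz : z ∈ O₁
  · have hz2 : z ∘ ⇑σ ∈ O₁ := hclO₁ z σ hz
    rw [hΨO (by exact_mod_cast hz2), hΨO (by exact_mod_cast hz)]
    exact hΦeq z σ hz
  · have hz1 : z ∈ A \ O₁ := Finset.mem_sdiff.2 ⟨hzA, hz⟩
    have hz2 : z ∘ ⇑σ ∈ A \ O₁ :=
      Finset.mem_sdiff.2 ⟨hA σ z hzA, fun h => hz (hclO₁' z σ h)⟩
    rw [hΨA' (by exact_mod_cast hz2), hΨA' (by exact_mod_cast hz1)]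
    exact hΨ'eq σ z hz1

lemma mon_inj {n : ℕ} {β γ : Fin n → ℕ}
    (h : (fun x : Fin n → ℝ => ∏ j, x j ^ β j) = (fun x : Fin n → ℝ => ∏ j, x j ^ γ j)) :
    β = γ := by
  funext j₀
  have hx := congrFun h (fun j => if j = j₀ then (2:ℝ) else 1)
  have e : ∀ δ : Fin n → ℕ,
      (∏ j, (if j = j₀ then (2:ℝ) else 1) ^ δ j) = 2 ^ δ j₀ := by
    intro δ
    rw [Finset.prod_eq_single j₀]
    · simp
    · intro b _ hb; rw [if_neg hb, one_pow]
    · intro hb; exact absurd (Finset.mem_univ j₀) hb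
  rw [e β, e γ] at hx
  exact (pow_right_strictMono₀ (one_lt_two)).injective hx

lemma fsmul_mon {n : ℕ} (σ : Equiv.Perm (Fin n)) (β : Fin n → ℕ) :
    fsmul σ (fun x : Fin n → ℝ => ∏ j, x j ^ β j) =
      fun x : Fin n → ℝ => ∏ j, x j ^ (β ∘ ⇑σ⁻¹) j := by
  funext x
  show ∏ j, (psmul σ⁻¹ x) j ^ β j = _
  have hps : psmul σ⁻¹ x = x ∘ ⇑σ := by
    simp [psmul]
  rw [hps]
  exact Fintype.prod_equiv σ _ _ (fun j => by simp)

lemma my_comp_inv_iff {m : ℕ} {T : Type*} (g : Fin m → T) (σ : Equiv.Perm (Fin m)) :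
    g ∘ ⇑σ⁻¹ = g ↔ g ∘ ⇑σ = g := by
  constructor
  · intro h
    funext i
    have := congrFun h (σ i)
    simpa using this.symm
  · intro h
    funext i
    have := congrFun h (σ⁻¹ i)
    simpa using this.symm

set_option maxHeartbeats 1000000 in
/-- in the symmetric unisolvent setup, if moreover each basis function is a
monomial `x ↦ x_1^{α_1} ⋯ x_n^{α_n}`, then the basis set `B` and the node set `P` are
equivalent as `S_n`-sets. -/
theorem stmt_18 {n N : ℕ} (f : Fin N → ((Fin n → ℝ) → ℝ)) (hf : LinearIndependent ℝ f)
    (hmono : ∀ i : Fin N, ∃ α : Fin n → ℕ, f i = fun x => ∏ j : Fin n, x j ^ α j)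
    (hBsym : ∀ σ, ∀ g ∈ Set.range f, fsmul σ g ∈ Set.range f)
    (a : Fin N → (Fin n → ℝ)) (ha : Function.Injective a)
    (hPsym : ∀ σ, ∀ p ∈ Set.range a, psmul σ p ∈ Set.range a)
    (hu : Unisolvent (Submodule.span ℝ (Set.range f)) a) :
    FPEquiv (Set.range f) (Set.range a) := by
  classical
  choose α hα using hmono
  have hfinj : Function.Injective f := hf.injective
  have hαinj : Function.Injective α := by
    intro i i' h
    apply hfinj
    rw [hα i, hα i', h]
  -- fsmul of basis elements
  have hfs : ∀ (σ : Equiv.Perm (Fin n)) (i : Fin N),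
      fsmul σ (f i) = fun x : Fin n → ℝ => ∏ j, x j ^ (α i ∘ ⇑σ⁻¹) j := by
    intro σ i; rw [hα i]; exact fsmul_mon σ (α i)
  -- exponent sets are symmetric
  have hαsym : ∀ (σ : Equiv.Perm (Fin n)) (i : Fin N), ∃ i', α i' = α i ∘ ⇑σ := by
    intro σ i
    obtain ⟨i', hi'⟩ := hBsym σ⁻¹ (f i) ⟨i, rfl⟩
    refine ⟨i', ?_⟩
    have := hfs σ⁻¹ i
    rw [inv_inv] at this
    rw [this] at hi'
    exact (mon_inj (by rw [← hi', hα i'])).symm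
  have hasym : ∀ (σ : Equiv.Perm (Fin n)) (j : Fin N), ∃ j', a j' = a j ∘ ⇑σ := by
    intro σ j
    obtain ⟨j', hj'⟩ := hPsym σ⁻¹ (a j) ⟨j, rfl⟩
    refine ⟨j', ?_⟩
    rw [hj']
    funext m
    simp [psmul]
  -- Vandermonde matrix
  set V : Matrix (Fin N) (Fin N) ℝ := Matrix.of (fun i j => f i (a j)) with hVdef
  have hVunit : IsUnit V := by
    rw [← Matrix.vecMul_surjective_iff_isUnit]
    intro b
    obtain ⟨⟨g, hg⟩, hg2, -⟩ := hu b
    obtain ⟨c, hc⟩ := (Submodule.mem_span_range_iff_exists_fun ℝ).1 hg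
    refine ⟨c, ?_⟩
    funext j
    have := congrFun (congrArg (fun (F : (Fin n → ℝ) → ℝ) => F) hc) (a j)
    calc (Matrix.vecMul c V) j = ∑ i, c i * f i (a j) := by
          simp [Matrix.vecMul, dotProduct, hVdef]
      _ = (∑ i, c i • f i) (a j) := by
          rw [Finset.sum_apply]; simp
      _ = b j := by rw [hc]; exact hg2 j
  have hVdetunit : IsUnit V.det := (Matrix.isUnit_iff_isUnit_det V).1 hVunit
  -- key counting identity
  have hcount : ∀ σ : Equiv.Perm (Fin n),
      (Finset.univ.filter fun i : Fin N => α i ∘ ⇑σ = α i).card =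
      (Finset.univ.filter fun j : Fin N => a j ∘ ⇑σ = a j).card := by
    intro σ
    -- index permutations
    have hπ : ∀ i, ∃ i', α i' = α i ∘ ⇑σ⁻¹ := fun i => hαsym σ⁻¹ i
    have hτ : ∀ j, ∃ j', a j' = a j ∘ ⇑σ⁻¹ := fun j => hasym σ⁻¹ j
    choose π hπs using hπ
    choose τ hτs using hτ
    have hπinj : Function.Injective π := by
      intro i i' h
      apply hαinj
      have h1 := hπs i
      have h2 := hπs i'
      rw [h] at h1
      have : α i ∘ ⇑σ⁻¹ = α i' ∘ ⇑σ⁻¹ := by rw [← h1, ← h2]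
      funext m
      have := congrFun this (σ m)
      simpa using this
    have hτinj : Function.Injective τ := by
      intro j j' h
      apply ha
      have h1 := hτs j
      have h2 := hτs j'
      rw [h] at h1
      have : a j ∘ ⇑σ⁻¹ = a j' ∘ ⇑σ⁻¹ := by rw [← h1, ← h2]
      funext m
      have := congrFun this (σ m)
      simpa using this
    set πe : Equiv.Perm (Fin N) := Equiv.ofBijective π (Finite.injective_iff_bijective.1 hπinj)
      with hπe
    set τe : Equiv.Perm (Fin N) := Equiv.ofBijective τ (Finite.injective_iff_bijective.1 hτinj)
      with hτe
    -- matrix relation V (π i) (τ j) = V i j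
    have hrel : ∀ i j, V (π i) (τ j) = V i j := by
      intro i j
      show f (π i) (a (τ j)) = f i (a j)
      rw [hα (π i), hα i, hπs i, hτs j]
      exact Fintype.prod_equiv σ⁻¹ _ _ (fun m => rfl)
    have hrel' : ∀ i j, V (πe i) (τe j) = V i j := hrel
    set P₁ : Matrix (Fin N) (Fin N) ℝ :=
      Matrix.of (fun i k => if πe⁻¹ i = k then (1:ℝ) else 0) with hP₁
    set P₂ : Matrix (Fin N) (Fin N) ℝ :=
      Matrix.of (fun k j => if k = τe j then (1:ℝ) else 0) with hP₂
    have hPV : P₁ * V = V * P₂ := by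
      ext i j
      rw [Matrix.mul_apply, Matrix.mul_apply]
      have l1 : ∑ k, P₁ i k * V k j = V (πe⁻¹ i) j := by
        simp [hP₁, ite_mul, Finset.sum_ite_eq]
      have l2 : ∑ k, V i k * P₂ k j = V i (τe j) := by
        simp [hP₂, mul_ite, Finset.sum_ite_eq']
      rw [l1, l2]
      have h1 : πe (πe⁻¹ i) = i := Equiv.apply_symm_apply πe i
      calc V (πe⁻¹ i) j = V (πe (πe⁻¹ i)) (τe j) := (hrel' (πe⁻¹ i) j).symm
        _ = V i (τe j) := by rw [h1]
    have hP1eq : P₁ = V * P₂ * V⁻¹ := by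
      calc P₁ = P₁ * V * V⁻¹ := (Matrix.mul_nonsing_inv_cancel_right V P₁ hVdetunit).symm
        _ = V * P₂ * V⁻¹ := by rw [hPV]
    have htrace : P₁.trace = P₂.trace := by
      rw [hP1eq, Matrix.trace_mul_cycle, Matrix.nonsing_inv_mul V hVdetunit, one_mul]
    have htr1 : P₁.trace = ((Finset.univ.filter fun i : Fin N => πe i = i).card : ℝ) := by
      rw [Finset.natCast_card_filter]
      simp only [Matrix.trace, Matrix.diag, hP₁, Matrix.of_apply]
      refine Finset.sum_congr rfl fun i _ => ?_
      congr 1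
      rw [eq_iff_iff]
      rw [Equiv.Perm.inv_eq_iff_eq, eq_comm]
    have htr2 : P₂.trace = ((Finset.univ.filter fun j : Fin N => τe j = j).card : ℝ) := by
      rw [Finset.natCast_card_filter]
      simp only [Matrix.trace, Matrix.diag, hP₂, Matrix.of_apply]
      refine Finset.sum_congr rfl fun j _ => ?_
      congr 1
      rw [eq_iff_iff, eq_comm]
    have hfixR : ((Finset.univ.filter fun i : Fin N => πe i = i).card : ℝ) =
        ((Finset.univ.filter fun j : Fin N => τe j = j).card : ℝ) := by
      rw [← htr1, ← htr2, htrace]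
    have hfix : (Finset.univ.filter fun i : Fin N => πe i = i).card =
        (Finset.univ.filter fun j : Fin N => τe j = j).card := by
      exact_mod_cast hfixR
    have e1 : (Finset.univ.filter fun i : Fin N => πe i = i) =
        (Finset.univ.filter fun i : Fin N => α i ∘ ⇑σ = α i) := by
      refine Finset.filter_congr fun i _ => ?_
      constructor
      · intro h
        have h' : π i = i := h
        have h2 := hπs i
        rw [h'] at h2
        exact (my_comp_inv_iff (α i) σ).1 h2.symm
      · intro h
        have h2 : α i ∘ ⇑σ⁻¹ = α i := (my_comp_inv_iff _ σ).2 h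
        show π i = i
        exact hαinj ((hπs i).trans h2)
    have e2 : (Finset.univ.filter fun j : Fin N => τe j = j) =
        (Finset.univ.filter fun j : Fin N => a j ∘ ⇑σ = a j) := by
      refine Finset.filter_congr fun j _ => ?_
      constructor
      · intro h
        have h' : τ j = j := h
        have h2 := hτs j
        rw [h'] at h2
        exact (my_comp_inv_iff (a j) σ).1 h2.symm
      · intro h
        have h2 : a j ∘ ⇑σ⁻¹ = a j := (my_comp_inv_iff _ σ).2 h
        show τ j = j
        exact ha ((hτs j).trans h2)
    rw [← e1, ← e2]
    exact hfix
  -- set up the finsets of exponents and points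
  set A : Finset (Fin n → ℕ) := Finset.univ.image α with hAdef
  set C : Finset (Fin n → ℝ) := Finset.univ.image a with hCdef
  have hAcl : ∀ σ : Equiv.Perm (Fin n), ∀ x ∈ A, x ∘ ⇑σ ∈ A := by
    intro σ x hx
    rw [hAdef, Finset.mem_image] at hx ⊢
    obtain ⟨i, -, rfl⟩ := hx
    obtain ⟨i', hi'⟩ := hαsym σ i
    exact ⟨i', Finset.mem_univ i', hi'⟩
  have hCcl : ∀ σ : Equiv.Perm (Fin n), ∀ y ∈ C, y ∘ ⇑σ ∈ C := by
    intro σ y hy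
    rw [hCdef, Finset.mem_image] at hy ⊢
    obtain ⟨j, -, rfl⟩ := hy
    obtain ⟨j', hj'⟩ := hasym σ j
    exact ⟨j', Finset.mem_univ j', hj'⟩
  have hACcount : ∀ σ : Equiv.Perm (Fin n),
      (A.filter fun x => x ∘ ⇑σ = x).card = (C.filter fun y => y ∘ ⇑σ = y).card := by
    intro σ
    have c1 : (A.filter fun x => x ∘ ⇑σ = x).card =
        (Finset.univ.filter fun i : Fin N => α i ∘ ⇑σ = α i).card := by
      rw [hAdef, Finset.filter_image, Finset.card_image_of_injective _ hαinj]
    have c2 : (C.filter fun y => y ∘ ⇑σ = y).card =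
        (Finset.univ.filter fun j : Fin N => a j ∘ ⇑σ = a j).card := by
      rw [hCdef, Finset.filter_image, Finset.card_image_of_injective _ ha]
    rw [c1, c2]
    exact hcount σ
  obtain ⟨Ψ, hΨbij, hΨeq⟩ := my_core (⟨fun _ => (0:ℝ)⟩ : Nonempty (Fin n → ℝ))
    A.card A C rfl hAcl hCcl
    (fun σ => by convert hACcount σ using 2; congr!)
  -- assemble the equivariant bijection
  have hArange : (↑A : Set (Fin n → ℕ)) = Set.range α := by
    rw [hAdef, Finset.coe_image, Finset.coe_univ, Set.image_univ]
  have hCrange : (↑C : Set (Fin n → ℝ)) = Set.range a := by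
    rw [hCdef, Finset.coe_image, Finset.coe_univ, Set.image_univ]
  have hmemA : ∀ i, α i ∈ A := fun i => Finset.mem_image.2 ⟨i, Finset.mem_univ i, rfl⟩
  have hΨmem : ∀ i, Ψ (α i) ∈ Set.range a := by
    intro i
    rw [← hCrange]
    exact hΨbij.mapsTo (by rw [hArange]; exact ⟨i, rfl⟩)
  -- the underlying function
  set F : Set.range f → Set.range a := fun z =>
    ⟨Ψ (α (Classical.choose z.2)), hΨmem _⟩ with hFdef
  have hFspec : ∀ (i : Fin N) (h : (f i : (Fin n → ℝ) → ℝ) ∈ Set.range f),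
      (F ⟨f i, h⟩ : Fin n → ℝ) = Ψ (α i) := by
    intro i h
    have hch : f (Classical.choose h) = f i := Classical.choose_spec h
    have : Classical.choose h = i := hfinj hch
    rw [hFdef]
    simp only
    rw [this]
  have hFbij : Function.Bijective F := by
    constructor
    · intro z w hzw
      obtain ⟨i, hi⟩ := z.2
      obtain ⟨i', hi'⟩ := w.2
      have hz : z = ⟨f i, ⟨i, rfl⟩⟩ := Subtype.ext hi.symm
      have hw : w = ⟨f i', ⟨i', rfl⟩⟩ := Subtype.ext hi'.symm
      rw [hz, hw] at hzw
      have : Ψ (α i) = Ψ (α i') := by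
        have := congrArg Subtype.val hzw
        rwa [hFspec i ⟨i, rfl⟩, hFspec i' ⟨i', rfl⟩] at this
      have hαeq : α i = α i' :=
        hΨbij.injOn (by rw [hArange]; exact ⟨i, rfl⟩) (by rw [hArange]; exact ⟨i', rfl⟩) this
      rw [hz, hw]
      exact Subtype.ext (by rw [hαinj hαeq])
    · intro w
      obtain ⟨j, hj⟩ := w.2
      have hwC : (w : Fin n → ℝ) ∈ (↑C : Set (Fin n → ℝ)) := by
        rw [hCrange]; exact w.2
      obtain ⟨x, hxA, hx⟩ := hΨbij.surjOn hwC
      rw [hArange] at hxA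
      obtain ⟨i, rfl⟩ := hxA
      refine ⟨⟨f i, ⟨i, rfl⟩⟩, ?_⟩
      apply Subtype.ext
      rw [hFspec i ⟨i, rfl⟩]
      exact hx
  set ψ : ↥(Set.range f) ≃ ↥(Set.range a) := Equiv.ofBijective F hFbij with hψdef
  refine ⟨ψ, ?_⟩
  intro σ z w hzw
  obtain ⟨i, hi⟩ := z.2
  obtain ⟨i', hi'⟩ := w.2
  have hz : z = ⟨f i, ⟨i, rfl⟩⟩ := Subtype.ext hi.symm
  have hw : w = ⟨f i', ⟨i', rfl⟩⟩ := Subtype.ext hi'.symm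
  rw [hz, hw] at hzw ⊢
  -- identify the exponent relation
  have hrel : α i' = α i ∘ ⇑σ⁻¹ := by
    have h1 : fsmul σ (f i) = f i' := hzw
    rw [hfs σ i, hα i'] at h1
    exact mon_inj h1.symm
  have hψz : (ψ ⟨f i, ⟨i, rfl⟩⟩ : Fin n → ℝ) = Ψ (α i) := hFspec i _
  have hψw : (ψ ⟨f i', ⟨i', rfl⟩⟩ : Fin n → ℝ) = Ψ (α i') := hFspec i' _
  rw [psmul, hψz, hψw, hrel]
  exact (hΨeq σ⁻¹ (α i) (hmemA i)).symm
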